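/- The 6-dimensional polytope P ⊂ ℝ⁶ with coordinates (a, b₁, …, b₅) defined by b_i ≥ 0 for 1 ≤ i ≤ 5, a - b_i - b_j ≥ 0 for all 1 ≤ i < j ≤ 5, 2a - (b₁ + ⋯ + b₅) ≥ 0, and 3a - (b₁ + ⋯ + b₅) ≤ 1, has Euclidean volume 1/1080. Consequently α(S) = 6 · vol(P) = 1/180 for a split quartic del Pezzo surface S. -/

import Mathlib

open MeasureTheory

/-! ### Vector literal evaluation helpers -/

lemma cv0 {α : Type*} (a b c d e f : α) : ![a,b,c,d,e,f] 0 = a := rfl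
lemma cv1 {α : Type*} (a b c d e f : α) : ![a,b,c,d,e,f] 1 = b := rfl
lemma cv2 {α : Type*} (a b c d e f : α) : ![a,b,c,d,e,f] 2 = c := rfl
lemma cv3 {α : Type*} (a b c d e f : α) : ![a,b,c,d,e,f] 3 = d := rfl
lemma cv4 {α : Type*} (a b c d e f : α) : ![a,b,c,d,e,f] 4 = e := rfl
lemma cv5 {α : Type*} (a b c d e f : α) : ![a,b,c,d,e,f] 5 = f := rfl
lemma fcs1 : Fin.castSucc (2:Fin 3) = (2:Fin 4) := rfl
lemma fcs2 : Fin.castSucc (2:Fin 4) = (2:Fin 5) := rfl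
lemma fcs3 : Fin.castSucc (Fin.succ (2:Fin 3)) = (3:Fin 5) := rfl
lemma fm0 (h : 0 < 6) : (⟨0,h⟩:Fin 6) = 0 := rfl
lemma fm1 (h : 1 < 6) : (⟨1,h⟩:Fin 6) = 1 := rfl
lemma fm2 (h : 2 < 6) : (⟨2,h⟩:Fin 6) = 2 := rfl
lemma fm3 (h : 3 < 6) : (⟨3,h⟩:Fin 6) = 3 := rfl
lemma fm4 (h : 4 < 6) : (⟨4,h⟩:Fin 6) = 4 := rfl
lemma fm5 (h : 5 < 6) : (⟨5,h⟩:Fin 6) = 5 := rfl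
lemma fs0 : Fin.succ (0:Fin 5) = (1:Fin 6) := rfl
lemma fs1 : Fin.succ (1:Fin 5) = (2:Fin 6) := rfl
lemma fs2 : Fin.succ (2:Fin 5) = (3:Fin 6) := rfl
lemma fs3 : Fin.succ (3:Fin 5) = (4:Fin 6) := rfl
lemma fs4 : Fin.succ (4:Fin 5) = (5:Fin 6) := rfl

/-! ### Volume of the corner simplex -/

theorem corner_simplex_vol : ∀ (n : ℕ) (c : ℝ), 0 ≤ c →
    volume {x : Fin n → ℝ | (∀ i, 0 ≤ x i) ∧ ∑ i, x i ≤ c}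
      = ENNReal.ofReal (c ^ n / n.factorial) := by
  intro n
  induction n with
  | zero =>
    intro c hc
    have : {x : Fin 0 → ℝ | (∀ i, 0 ≤ x i) ∧ ∑ i, x i ≤ c} = Set.univ :=
      Set.eq_univ_of_forall fun x => ⟨fun i => i.elim0, by simpa using hc⟩
    rw [this, MeasureTheory.volume_pi, Measure.pi_univ]
    simp
  | succ n ih =>
    intro c hc
    set e := MeasurableEquiv.piFinSuccAbove (fun _ : Fin (n+1) => ℝ) 0 with he
    have hmp := MeasureTheory.volume_preserving_piFinSuccAbove (fun _ : Fin (n+1) => ℝ) 0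
    set T : Set (ℝ × (Fin n → ℝ)) :=
      {p | 0 ≤ p.1 ∧ (∀ i, 0 ≤ p.2 i) ∧ p.1 + ∑ i, p.2 i ≤ c} with hT
    have hTm : MeasurableSet T := by
      have h1 : MeasurableSet {p : ℝ × (Fin n → ℝ) | 0 ≤ p.1} :=
        measurableSet_le measurable_const measurable_fst
      have h2 : MeasurableSet {p : ℝ × (Fin n → ℝ) | ∀ i, 0 ≤ p.2 i} := by
        rw [Set.setOf_forall]
        refine MeasurableSet.iInter fun i => measurableSet_le measurable_const ?_
        exact (measurable_pi_apply i).comp measurable_snd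
      have h3 : MeasurableSet {p : ℝ × (Fin n → ℝ) | p.1 + ∑ i, p.2 i ≤ c} :=
        measurableSet_le (measurable_fst.add <|
          Finset.measurable_sum _ fun i _ => (measurable_pi_apply i).comp measurable_snd)
          measurable_const
      exact h1.inter (h2.inter h3)
    have hpre : e ⁻¹' T = {x : Fin (n+1) → ℝ | (∀ i, 0 ≤ x i) ∧ ∑ i, x i ≤ c} := by
      ext x
      have hex : e x = (x 0, fun j : Fin n => x (Fin.succAbove 0 j)) := rfl
      simp only [Set.mem_preimage, hex, hT, Set.mem_setOf_eq, Set.mem_setOf_eq]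
      rw [Fin.sum_univ_succ x, Fin.forall_fin_succ]
      simp [Fin.succAbove_zero]
      tauto
    have key : volume T = ENNReal.ofReal (c ^ (n+1) / (n+1).factorial) := by
      rw [Measure.volume_eq_prod, Measure.prod_apply hTm]
      have hsec : ∀ a : ℝ, volume (Prod.mk a ⁻¹' T)
          = Set.indicator (Set.Icc 0 c) (fun a => ENNReal.ofReal ((c - a) ^ n / n.factorial)) a := by
        intro a
        rcases le_or_gt 0 a with ha | ha
        · rcases le_or_gt a c with hac | hac
          · have : Prod.mk a ⁻¹' T = {y : Fin n → ℝ | (∀ i, 0 ≤ y i) ∧ ∑ i, y i ≤ c - a} := by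
              ext y; simp only [Set.mem_preimage, hT, Set.mem_setOf_eq]
              constructor
              · rintro ⟨-, h2, h3⟩; exact ⟨h2, by linarith⟩
              · rintro ⟨h2, h3⟩; exact ⟨ha, h2, by linarith⟩
            rw [this, ih _ (by linarith), Set.indicator_of_mem (Set.mem_Icc.2 ⟨ha, hac⟩)]
          · have : Prod.mk a ⁻¹' T = ∅ := by
              ext y; simp only [Set.mem_preimage, hT, Set.mem_setOf_eq, Set.mem_empty_iff_false,
                iff_false, not_and]
              intro _ hy
              have : (0:ℝ) ≤ ∑ i, y i := Finset.sum_nonneg fun i _ => hy i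
              linarith
            rw [this, Set.indicator_of_notMem (by simp [Set.mem_Icc]; intro; linarith)]
            simp
        · have : Prod.mk a ⁻¹' T = ∅ := by
            ext y; simp only [Set.mem_preimage, hT, Set.mem_setOf_eq, Set.mem_empty_iff_false,
              iff_false, not_and]
            intro h; linarith
          rw [this, Set.indicator_of_notMem (by simp [Set.mem_Icc]; intro; linarith)]
          simp
      rw [lintegral_congr hsec, lintegral_indicator measurableSet_Icc]
      have hnn : 0 ≤ᵐ[volume.restrict (Set.Icc 0 c)] fun a : ℝ => (c - a) ^ n / n.factorial := by
        refine (ae_restrict_iff' measurableSet_Icc).2 (Filter.Eventually.of_forall ?_)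
        intro a ha
        have : (0:ℝ) ≤ (c - a) ^ n := pow_nonneg (by linarith [ha.2]) n
        positivity
      have hint : IntegrableOn (fun a : ℝ => (c - a) ^ n / n.factorial) (Set.Icc 0 c) := by
        apply Continuous.integrableOn_Icc
        continuity
      rw [← MeasureTheory.ofReal_integral_eq_lintegral_ofReal hint hnn]
      congr 1
      rw [MeasureTheory.integral_Icc_eq_integral_Ioc, ← intervalIntegral.integral_of_le hc]
      have : (∫ a in (0:ℝ)..c, (c - a) ^ n / n.factorial)
          = (∫ a in (0:ℝ)..c, (c - a) ^ n) / n.factorial := by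
        rw [intervalIntegral.integral_div]
      rw [this, intervalIntegral.integral_comp_sub_left (fun x => x ^ n) c]
      simp only [sub_self, sub_zero, integral_pow]
      rw [Nat.factorial_succ]
      push_cast
      field_simp
      simp
    rw [← hpre, hmp.measure_preimage hTm.nullMeasurableSet]
    exact key

/-! ### The polytope and sorted pieces -/

def Pset : Set (ℝ × (Fin 5 → ℝ)) :=
  {p | (∀ i, 0 ≤ p.2 i) ∧
       (∀ i j : Fin 5, i ≠ j → 0 ≤ p.1 - p.2 i - p.2 j) ∧
       0 ≤ 2 * p.1 - (∑ j, p.2 j) ∧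
       3 * p.1 - (∑ j, p.2 j) ≤ 1}

def Wset (σ : Equiv.Perm (Fin 5)) : Set (ℝ × (Fin 5 → ℝ)) :=
  {p | Monotone fun k => p.2 (σ k)}

lemma msnd (i : Fin 5) : Measurable fun p : ℝ × (Fin 5 → ℝ) => p.2 i :=
  (measurable_pi_apply i).comp measurable_snd

lemma measurable_Pset : MeasurableSet Pset := by
  have h1 : MeasurableSet {p : ℝ × (Fin 5 → ℝ) | ∀ i, 0 ≤ p.2 i} := by
    rw [Set.setOf_forall]
    exact MeasurableSet.iInter fun i => measurableSet_le measurable_const (msnd i)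
  have h2 : MeasurableSet {p : ℝ × (Fin 5 → ℝ) | ∀ i j : Fin 5, i ≠ j → 0 ≤ p.1 - p.2 i - p.2 j} := by
    rw [Set.setOf_forall]
    refine MeasurableSet.iInter fun i => ?_
    rw [Set.setOf_forall]
    refine MeasurableSet.iInter fun j => ?_
    by_cases hij : i = j
    · simp [hij]
    · have : {p : ℝ × (Fin 5 → ℝ) | i ≠ j → 0 ≤ p.1 - p.2 i - p.2 j}
          = {p : ℝ × (Fin 5 → ℝ) | 0 ≤ p.1 - p.2 i - p.2 j} := by
        ext p; simp [hij]
      rw [this]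
      exact measurableSet_le measurable_const ((measurable_fst.sub (msnd i)).sub (msnd j))
  have hsum : Measurable fun p : ℝ × (Fin 5 → ℝ) => ∑ j, p.2 j :=
    Finset.measurable_sum _ fun j _ => msnd j
  have h3 : MeasurableSet {p : ℝ × (Fin 5 → ℝ) | 0 ≤ 2 * p.1 - (∑ j, p.2 j)} :=
    measurableSet_le measurable_const ((measurable_const.mul measurable_fst).sub hsum)
  have h4 : MeasurableSet {p : ℝ × (Fin 5 → ℝ) | 3 * p.1 - (∑ j, p.2 j) ≤ 1} :=
    measurableSet_le ((measurable_const.mul measurable_fst).sub hsum) measurable_const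
  exact h1.inter (h2.inter (h3.inter h4))

lemma measurable_Wset (σ : Equiv.Perm (Fin 5)) : MeasurableSet (Wset σ) := by
  have : Wset σ = ⋂ (k : Fin 5) (l : Fin 5), {p : ℝ × (Fin 5 → ℝ) | k ≤ l → p.2 (σ k) ≤ p.2 (σ l)} := by
    ext p
    exact ⟨fun h => Set.mem_iInter.2 fun k => Set.mem_iInter.2 fun l hkl => h hkl,
           fun h a b hab => (Set.mem_iInter.1 (Set.mem_iInter.1 h a) b) hab⟩
  rw [this]
  refine MeasurableSet.iInter fun k => MeasurableSet.iInter fun l => ?_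
  by_cases hkl : k ≤ l
  · have : {p : ℝ × (Fin 5 → ℝ) | k ≤ l → p.2 (σ k) ≤ p.2 (σ l)}
        = {p : ℝ × (Fin 5 → ℝ) | p.2 (σ k) ≤ p.2 (σ l)} := by ext p; simp [hkl]
    rw [this]
    exact measurableSet_le (msnd (σ k)) (msnd (σ l))
  · simp [hkl]

/-! ### Permutation invariance -/

lemma mp_comp (σ : Equiv.Perm (Fin 5)) :
    MeasurePreserving (fun b : Fin 5 → ℝ => b ∘ σ) volume volume := by
  have h := MeasureTheory.volume_measurePreserving_piCongrLeft (fun _ : Fin 5 => ℝ) σ.symm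
  have he : ⇑(MeasurableEquiv.piCongrLeft (fun _ : Fin 5 => ℝ) σ.symm)
      = fun b : Fin 5 → ℝ => b ∘ σ := by
    funext b
    funext j
    have h2 := Equiv.piCongrLeft_apply_apply (fun _ : Fin 5 => ℝ) σ.symm b (σ j)
    simp only [Equiv.symm_apply_apply] at h2
    rw [MeasurableEquiv.coe_piCongrLeft]
    exact h2
  rwa [he] at h

lemma mp_prodmap (σ : Equiv.Perm (Fin 5)) :
    MeasurePreserving (fun p : ℝ × (Fin 5 → ℝ) => (p.1, p.2 ∘ σ)) volume volume := by
  have h := (MeasurePreserving.id (volume : Measure ℝ)).prod (mp_comp σ)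
  rw [← Measure.volume_eq_prod] at h
  exact h

lemma Pset_act (σ : Equiv.Perm (Fin 5)) {p : ℝ × (Fin 5 → ℝ)} (hp : p ∈ Pset) :
    (p.1, p.2 ∘ σ) ∈ Pset := by
  simp only [Pset, Set.mem_setOf_eq] at hp ⊢
  obtain ⟨h1, h2, h3, h4⟩ := hp
  have hsum : ∑ x, p.2 (σ x) = ∑ j, p.2 j := Equiv.sum_comp σ fun k => p.2 k
  refine ⟨fun i => h1 (σ i),
    fun i j hij => h2 (σ i) (σ j) (fun hh => hij (σ.injective hh)), ?_, ?_⟩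
  · simpa [hsum] using h3
  · simpa [hsum] using h4

lemma Pset_preimage (σ : Equiv.Perm (Fin 5)) :
    (fun p : ℝ × (Fin 5 → ℝ) => (p.1, p.2 ∘ σ)) ⁻¹' Pset = Pset := by
  ext p
  constructor
  · intro h
    have h2 := Pset_act σ.symm h
    have : (p.2 ∘ σ) ∘ σ.symm = p.2 := by
      funext k; simp
    simpa [this] using h2
  · intro h
    exact Pset_act σ h

lemma vol_piece (σ : Equiv.Perm (Fin 5)) :
    volume (Pset ∩ Wset σ) = volume (Pset ∩ Wset 1) := by
  have hmp := mp_prodmap σ.symm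
  have hpre : (fun p : ℝ × (Fin 5 → ℝ) => (p.1, p.2 ∘ σ.symm)) ⁻¹' (Pset ∩ Wset σ)
      = Pset ∩ Wset 1 := by
    rw [Set.preimage_inter, Pset_preimage σ.symm]
    congr 1
    ext p
    simp only [Wset, Set.mem_preimage, Set.mem_setOf_eq, Function.comp,
      Equiv.symm_apply_apply, Equiv.Perm.coe_one, id]
  rw [← hpre,
    hmp.measure_preimage ((measurable_Pset.inter (measurable_Wset σ)).nullMeasurableSet)]

lemma Pset_cover : Pset = ⋃ σ : Equiv.Perm (Fin 5), (Pset ∩ Wset σ) := by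
  apply Set.Subset.antisymm
  · intro p hp
    refine Set.mem_iUnion.2 ⟨Tuple.sort p.2, hp, ?_⟩
    exact Tuple.monotone_sort p.2
  · exact Set.iUnion_subset fun σ => Set.inter_subset_left

lemma null_eq_coord (i j : Fin 5) (hij : i ≠ j) :
    volume {p : ℝ × (Fin 5 → ℝ) | p.2 i = p.2 j} = 0 := by
  have h5 : volume {b : Fin 5 → ℝ | b i = b j} = 0 := by
    set L : (Fin 5 → ℝ) →ₗ[ℝ] ℝ :=
      (LinearMap.proj i : (Fin 5 → ℝ) →ₗ[ℝ] ℝ) - (LinearMap.proj j : (Fin 5 → ℝ) →ₗ[ℝ] ℝ) with hL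
    have hset : {b : Fin 5 → ℝ | b i = b j} = (LinearMap.ker L : Set (Fin 5 → ℝ)) := by
      ext b
      simp [hL, LinearMap.mem_ker, sub_eq_zero]
    rw [hset]
    refine Measure.addHaar_submodule _ _ fun htop => ?_
    have hmem : Pi.single i (1:ℝ) ∈ LinearMap.ker L := htop ▸ Submodule.mem_top
    rw [LinearMap.mem_ker, hL] at hmem
    simp only [LinearMap.sub_apply, LinearMap.proj_apply, Pi.single_eq_same,
      Pi.single_eq_of_ne (Ne.symm hij)] at hmem
    norm_num at hmem
  have : {p : ℝ × (Fin 5 → ℝ) | p.2 i = p.2 j} = (Set.univ : Set ℝ) ×ˢ {b : Fin 5 → ℝ | b i = b j} := by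
    ext p; simp [Set.mem_prod]
  rw [this, Measure.volume_eq_prod, Measure.prod_prod, h5, mul_zero]

lemma pairwise_aedisjoint :
    Pairwise (Function.onFun (AEDisjoint volume) fun σ : Equiv.Perm (Fin 5) => Pset ∩ Wset σ) := by
  intro σ τ hne
  have hsub : (Pset ∩ Wset σ) ∩ (Pset ∩ Wset τ) ⊆
      ⋃ (i : Fin 5) (j : Fin 5) (_ : i ≠ j), {p : ℝ × (Fin 5 → ℝ) | p.2 i = p.2 j} := by
    intro p hp
    by_contra hN
    simp only [Set.mem_iUnion, Set.mem_setOf_eq, not_exists] at hN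
    have hinj : Function.Injective p.2 := by
      intro a b hab
      by_contra hne2
      exact hN a b hne2 hab
    have hw1 : Monotone fun k => p.2 (σ k) := hp.1.2
    have hw2 : Monotone fun k => p.2 (τ k) := hp.2.2
    have hσ : StrictMono fun k => p.2 (σ k) :=
      hw1.strictMono_of_injective (hinj.comp σ.injective)
    have hτ : StrictMono fun k => p.2 (τ k) :=
      hw2.strictMono_of_injective (hinj.comp τ.injective)
    have hst : StrictMono ⇑(σ.trans τ.symm) := by
      intro a b hab
      have h1 : p.2 (σ a) < p.2 (σ b) := hσ hab
      have h2 : p.2 (τ (τ.symm (σ a))) < p.2 (τ (τ.symm (σ b))) := by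
        simpa [Equiv.apply_symm_apply] using h1
      exact hτ.lt_iff_lt.mp h2
    haveI : WellFoundedLT (Fin 5) := Finite.to_wellFoundedLT
    have hid : ∀ k, (σ.trans τ.symm) k = k := by
      intro k
      have h1 : k ≤ (σ.trans τ.symm) k := hst.le_apply
      have hsymm : StrictMono ⇑(σ.trans τ.symm).symm := by
        intro a b hab
        rw [← hst.lt_iff_lt]
        simpa [Equiv.apply_symm_apply] using hab
      have h2 : (σ.trans τ.symm) k ≤ k := by
        have h3 := hsymm.le_apply (x := (σ.trans τ.symm) k)
        simpa [Equiv.symm_apply_apply] using h3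
      exact le_antisymm h2 h1
    apply hne
    refine Equiv.ext fun k => ?_
    have h4 := hid k
    simp only [Equiv.trans_apply] at h4
    have h5 := congrArg τ h4
    simpa [Equiv.apply_symm_apply] using h5
  refine measure_mono_null hsub ?_
  exact measure_iUnion_null fun i => measure_iUnion_null fun j =>
    measure_iUnion_null fun hij => null_eq_coord i j hij

lemma vol_Pset_eq : volume Pset = 120 * volume (Pset ∩ Wset 1) := by
  have hmeas : ∀ σ : Equiv.Perm (Fin 5), NullMeasurableSet (Pset ∩ Wset σ) volume :=
    fun σ => (measurable_Pset.inter (measurable_Wset σ)).nullMeasurableSet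
  conv_lhs => rw [Pset_cover]
  rw [measure_iUnion₀ pairwise_aedisjoint hmeas, tsum_fintype]
  rw [Finset.sum_congr rfl fun σ _ => vol_piece σ, Finset.sum_const]
  have hcard : (Finset.univ : Finset (Equiv.Perm (Fin 5))).card = 120 := by
    rw [Finset.card_univ, Fintype.card_perm, Fintype.card_fin]
    norm_num [Nat.factorial]
  rw [hcard]
  rw [nsmul_eq_mul]
  norm_num
set_option maxRecDepth 100000

noncomputable def A1 : Matrix (Fin 6) (Fin 6) ℝ := Matrix.of
  ![![(3:ℝ),(0:ℝ),(0:ℝ),(0:ℝ),(-3:ℝ),(-3:ℝ)],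
    ![(0:ℝ),(0:ℝ),(0:ℝ),(-4:ℝ),(4:ℝ),(0:ℝ)],
    ![(0:ℝ),(0:ℝ),(0:ℝ),(0:ℝ),(-2:ℝ),(2:ℝ)],
    ![(0:ℝ),(-3:ℝ),(-3:ℝ),(3:ℝ),(0:ℝ),(0:ℝ)],
    ![(0:ℝ),(4:ℝ),(0:ℝ),(0:ℝ),(0:ℝ),(0:ℝ)],
    ![(0:ℝ),(-2:ℝ),(2:ℝ),(0:ℝ),(0:ℝ),(0:ℝ)]]

noncomputable def A2 : Matrix (Fin 6) (Fin 6) ℝ := Matrix.of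
  ![![(3:ℝ),(0:ℝ),(0:ℝ),(0:ℝ),(-3:ℝ),(-3:ℝ)],
    ![(0:ℝ),(0:ℝ),(0:ℝ),(-4:ℝ),(4:ℝ),(0:ℝ)],
    ![(0:ℝ),(-2:ℝ),(-2:ℝ),(2:ℝ),(-2:ℝ),(2:ℝ)],
    ![(0:ℝ),(0:ℝ),(-4:ℝ),(4:ℝ),(0:ℝ),(0:ℝ)],
    ![(0:ℝ),(-2:ℝ),(2:ℝ),(0:ℝ),(0:ℝ),(0:ℝ)],
    ![(0:ℝ),(3:ℝ),(3:ℝ),(-3:ℝ),(0:ℝ),(0:ℝ)]]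

noncomputable def A3 : Matrix (Fin 6) (Fin 6) ℝ := Matrix.of
  ![![(3:ℝ),(0:ℝ),(0:ℝ),(0:ℝ),(-3:ℝ),(-3:ℝ)],
    ![(0:ℝ),(-2:ℝ),(-2:ℝ),(-2:ℝ),(2:ℝ),(2:ℝ)],
    ![(0:ℝ),(3:ℝ),(3:ℝ),(-3:ℝ),(3:ℝ),(-3:ℝ)],
    ![(0:ℝ),(0:ℝ),(-4:ℝ),(4:ℝ),(0:ℝ),(0:ℝ)],
    ![(0:ℝ),(-2:ℝ),(2:ℝ),(0:ℝ),(0:ℝ),(0:ℝ)],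
    ![(0:ℝ),(0:ℝ),(0:ℝ),(0:ℝ),(-3:ℝ),(3:ℝ)]]

noncomputable def A4 : Matrix (Fin 6) (Fin 6) ℝ := Matrix.of
  ![![(3:ℝ),(-3/2:ℝ),(-3/2:ℝ),(-3/2:ℝ),(-3/2:ℝ),(-3/2:ℝ)],
    ![(0:ℝ),(5/2:ℝ),(5/2:ℝ),(5/2:ℝ),(-5/2:ℝ),(-5/2:ℝ)],
    ![(0:ℝ),(0:ℝ),(0:ℝ),(-6:ℝ),(6:ℝ),(0:ℝ)],
    ![(0:ℝ),(0:ℝ),(-4:ℝ),(4:ℝ),(0:ℝ),(0:ℝ)],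
    ![(0:ℝ),(-2:ℝ),(2:ℝ),(0:ℝ),(0:ℝ),(0:ℝ)],
    ![(0:ℝ),(0:ℝ),(0:ℝ),(0:ℝ),(-3:ℝ),(3:ℝ)]]

def DSet : Set (Fin 6 → ℝ) := {t | (∀ j, 0 ≤ t j) ∧ ∑ j, t j ≤ 1}

noncomputable def S1 : Set (Fin 6 → ℝ) := Matrix.toLin' A1 ⁻¹' DSet
noncomputable def S2 : Set (Fin 6 → ℝ) := Matrix.toLin' A2 ⁻¹' DSet
noncomputable def S3 : Set (Fin 6 → ℝ) := Matrix.toLin' A3 ⁻¹' DSet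
noncomputable def S4 : Set (Fin 6 → ℝ) := Matrix.toLin' A4 ⁻¹' DSet

lemma detA1 : (A1).det = 576 := by
  simp (config := {decide := true}) [A1, Matrix.det_succ_row_zero, Fin.sum_univ_succ,
    Fin.succAbove_of_castSucc_lt, Fin.succAbove_of_le_castSucc]
  norm_num

lemma detA2 : (A2).det = -576 := by
  simp (config := {decide := true}) [A2, Matrix.det_succ_row_zero, Fin.sum_univ_succ,
    Fin.succAbove_of_castSucc_lt, Fin.succAbove_of_le_castSucc]
  norm_num

lemma detA3 : (A3).det = 864 := by
  simp (config := {decide := true}) [A3, Matrix.det_succ_row_zero, Fin.sum_univ_succ,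
    Fin.succAbove_of_castSucc_lt, Fin.succAbove_of_le_castSucc]
  norm_num

lemma detA4 : (A4).det = -1080 := by
  simp (config := {decide := true}) [A4, Matrix.det_succ_row_zero, Fin.sum_univ_succ,
    Fin.succAbove_of_castSucc_lt, Fin.succAbove_of_le_castSucc]
  norm_num

lemma memS1 (x : Fin 6 → ℝ) : x ∈ S1 ↔
    (0 ≤ (3) * x 0 + (-3) * x 4 + (-3) * x 5 ∧
      0 ≤ (-4) * x 3 + (4) * x 4 ∧
      0 ≤ (-2) * x 4 + (2) * x 5 ∧
      0 ≤ (-3) * x 1 + (-3) * x 2 + (3) * x 3 ∧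
      0 ≤ (4) * x 1 ∧
      0 ≤ (-2) * x 1 + (2) * x 2) ∧
      3 * x 0 - (x 1 + x 2 + x 3 + x 4 + x 5) ≤ 1 := by
  simp only [S1, Set.mem_preimage, DSet, Set.mem_setOf_eq]
  constructor
  · rintro ⟨h, hs⟩
    have h0 := h 0; have h1 := h 1; have h2 := h 2
    have h3 := h 3; have h4 := h 4; have h5 := h 5
    simp only [Matrix.toLin'_apply, Matrix.mulVec, dotProduct, Fin.sum_univ_six, A1,
      Matrix.of_apply, cv0, cv1, cv2, cv3, cv4, cv5, fm0, fm1, fm2, fm3, fm4, fm5] at h0 h1 h2 h3 h4 h5 hs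
    refine ⟨⟨by linarith, by linarith, by linarith, by linarith, by linarith, by linarith⟩,
      by linarith⟩
  · rintro ⟨⟨k0, k1, k2, k3, k4, k5⟩, ks⟩
    constructor
    · intro j
      fin_cases j <;>
        simp only [Matrix.toLin'_apply, Matrix.mulVec, dotProduct, Fin.sum_univ_six, A1,
          Matrix.of_apply, cv0, cv1, cv2, cv3, cv4, cv5, fm0, fm1, fm2, fm3, fm4, fm5] <;>
        linarith
    · simp only [Matrix.toLin'_apply, Matrix.mulVec, dotProduct, Fin.sum_univ_six, A1,
        Matrix.of_apply, cv0, cv1, cv2, cv3, cv4, cv5, fm0, fm1, fm2, fm3, fm4, fm5]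
      linarith

lemma memS2 (x : Fin 6 → ℝ) : x ∈ S2 ↔
    (0 ≤ (3) * x 0 + (-3) * x 4 + (-3) * x 5 ∧
      0 ≤ (-4) * x 3 + (4) * x 4 ∧
      0 ≤ (-2) * x 1 + (-2) * x 2 + (2) * x 3 + (-2) * x 4 + (2) * x 5 ∧
      0 ≤ (-4) * x 2 + (4) * x 3 ∧
      0 ≤ (-2) * x 1 + (2) * x 2 ∧
      0 ≤ (3) * x 1 + (3) * x 2 + (-3) * x 3) ∧
      3 * x 0 - (x 1 + x 2 + x 3 + x 4 + x 5) ≤ 1 := by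
  simp only [S2, Set.mem_preimage, DSet, Set.mem_setOf_eq]
  constructor
  · rintro ⟨h, hs⟩
    have h0 := h 0; have h1 := h 1; have h2 := h 2
    have h3 := h 3; have h4 := h 4; have h5 := h 5
    simp only [Matrix.toLin'_apply, Matrix.mulVec, dotProduct, Fin.sum_univ_six, A2,
      Matrix.of_apply, cv0, cv1, cv2, cv3, cv4, cv5, fm0, fm1, fm2, fm3, fm4, fm5] at h0 h1 h2 h3 h4 h5 hs
    refine ⟨⟨by linarith, by linarith, by linarith, by linarith, by linarith, by linarith⟩,
      by linarith⟩
  · rintro ⟨⟨k0, k1, k2, k3, k4, k5⟩, ks⟩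
    constructor
    · intro j
      fin_cases j <;>
        simp only [Matrix.toLin'_apply, Matrix.mulVec, dotProduct, Fin.sum_univ_six, A2,
          Matrix.of_apply, cv0, cv1, cv2, cv3, cv4, cv5, fm0, fm1, fm2, fm3, fm4, fm5] <;>
        linarith
    · simp only [Matrix.toLin'_apply, Matrix.mulVec, dotProduct, Fin.sum_univ_six, A2,
        Matrix.of_apply, cv0, cv1, cv2, cv3, cv4, cv5, fm0, fm1, fm2, fm3, fm4, fm5]
      linarith

lemma memS3 (x : Fin 6 → ℝ) : x ∈ S3 ↔
    (0 ≤ (3) * x 0 + (-3) * x 4 + (-3) * x 5 ∧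
      0 ≤ (-2) * x 1 + (-2) * x 2 + (-2) * x 3 + (2) * x 4 + (2) * x 5 ∧
      0 ≤ (3) * x 1 + (3) * x 2 + (-3) * x 3 + (3) * x 4 + (-3) * x 5 ∧
      0 ≤ (-4) * x 2 + (4) * x 3 ∧
      0 ≤ (-2) * x 1 + (2) * x 2 ∧
      0 ≤ (-3) * x 4 + (3) * x 5) ∧
      3 * x 0 - (x 1 + x 2 + x 3 + x 4 + x 5) ≤ 1 := by
  simp only [S3, Set.mem_preimage, DSet, Set.mem_setOf_eq]
  constructor
  · rintro ⟨h, hs⟩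
    have h0 := h 0; have h1 := h 1; have h2 := h 2
    have h3 := h 3; have h4 := h 4; have h5 := h 5
    simp only [Matrix.toLin'_apply, Matrix.mulVec, dotProduct, Fin.sum_univ_six, A3,
      Matrix.of_apply, cv0, cv1, cv2, cv3, cv4, cv5, fm0, fm1, fm2, fm3, fm4, fm5] at h0 h1 h2 h3 h4 h5 hs
    refine ⟨⟨by linarith, by linarith, by linarith, by linarith, by linarith, by linarith⟩,
      by linarith⟩
  · rintro ⟨⟨k0, k1, k2, k3, k4, k5⟩, ks⟩
    constructor
    · intro j
      fin_cases j <;>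
        simp only [Matrix.toLin'_apply, Matrix.mulVec, dotProduct, Fin.sum_univ_six, A3,
          Matrix.of_apply, cv0, cv1, cv2, cv3, cv4, cv5, fm0, fm1, fm2, fm3, fm4, fm5] <;>
        linarith
    · simp only [Matrix.toLin'_apply, Matrix.mulVec, dotProduct, Fin.sum_univ_six, A3,
        Matrix.of_apply, cv0, cv1, cv2, cv3, cv4, cv5, fm0, fm1, fm2, fm3, fm4, fm5]
      linarith

lemma memS4 (x : Fin 6 → ℝ) : x ∈ S4 ↔
    (0 ≤ (3) * x 0 + (-3/2) * x 1 + (-3/2) * x 2 + (-3/2) * x 3 + (-3/2) * x 4 + (-3/2) * x 5 ∧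
      0 ≤ (5/2) * x 1 + (5/2) * x 2 + (5/2) * x 3 + (-5/2) * x 4 + (-5/2) * x 5 ∧
      0 ≤ (-6) * x 3 + (6) * x 4 ∧
      0 ≤ (-4) * x 2 + (4) * x 3 ∧
      0 ≤ (-2) * x 1 + (2) * x 2 ∧
      0 ≤ (-3) * x 4 + (3) * x 5) ∧
      3 * x 0 - (x 1 + x 2 + x 3 + x 4 + x 5) ≤ 1 := by
  simp only [S4, Set.mem_preimage, DSet, Set.mem_setOf_eq]
  constructor
  · rintro ⟨h, hs⟩
    have h0 := h 0; have h1 := h 1; have h2 := h 2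
    have h3 := h 3; have h4 := h 4; have h5 := h 5
    simp only [Matrix.toLin'_apply, Matrix.mulVec, dotProduct, Fin.sum_univ_six, A4,
      Matrix.of_apply, cv0, cv1, cv2, cv3, cv4, cv5, fm0, fm1, fm2, fm3, fm4, fm5] at h0 h1 h2 h3 h4 h5 hs
    refine ⟨⟨by linarith, by linarith, by linarith, by linarith, by linarith, by linarith⟩,
      by linarith⟩
  · rintro ⟨⟨k0, k1, k2, k3, k4, k5⟩, ks⟩
    constructor
    · intro j
      fin_cases j <;>
        simp only [Matrix.toLin'_apply, Matrix.mulVec, dotProduct, Fin.sum_univ_six, A4,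
          Matrix.of_apply, cv0, cv1, cv2, cv3, cv4, cv5, fm0, fm1, fm2, fm3, fm4, fm5] <;>
        linarith
    · simp only [Matrix.toLin'_apply, Matrix.mulVec, dotProduct, Fin.sum_univ_six, A4,
        Matrix.of_apply, cv0, cv1, cv2, cv3, cv4, cv5, fm0, fm1, fm2, fm3, fm4, fm5]
      linarith
/-! ### The sorted region -/

def R6 : Set (Fin 6 → ℝ) :=
  {x | 0 ≤ x 1 ∧ x 1 ≤ x 2 ∧ x 2 ≤ x 3 ∧ x 3 ≤ x 4 ∧ x 4 ≤ x 5 ∧ x 4 + x 5 ≤ x 0 ∧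
       x 1 + x 2 + x 3 + x 4 + x 5 ≤ 2 * x 0 ∧ 3 * x 0 - (x 1 + x 2 + x 3 + x 4 + x 5) ≤ 1}

lemma preim_R6 :
    (⇑(MeasurableEquiv.piFinSuccAbove (fun _ : Fin 6 => ℝ) 0)) ⁻¹' (Pset ∩ Wset 1) = R6 := by
  ext x
  have hex : (MeasurableEquiv.piFinSuccAbove (fun _ : Fin 6 => ℝ) 0) x
      = (x 0, fun j : Fin 5 => x j.succ) := rfl
  simp only [Set.mem_preimage, hex, Set.mem_inter_iff, Pset, Wset, Set.mem_setOf_eq,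
    Equiv.Perm.coe_one, id, R6, Fin.sum_univ_five, fs0, fs1, fs2, fs3, fs4]
  constructor
  · rintro ⟨⟨h1, h2, h3, h4⟩, hm⟩
    have k1 : 0 ≤ x 1 := by have := h1 0; simpa only [fs0] using this
    have m12 : x 1 ≤ x 2 := by
      have := hm (show (0:Fin 5) ≤ 1 by decide); simpa only [fs0, fs1] using this
    have m23 : x 2 ≤ x 3 := by
      have := hm (show (1:Fin 5) ≤ 2 by decide); simpa only [fs1, fs2] using this
    have m34 : x 3 ≤ x 4 := by
      have := hm (show (2:Fin 5) ≤ 3 by decide); simpa only [fs2, fs3] using this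
    have m45 : x 4 ≤ x 5 := by
      have := hm (show (3:Fin 5) ≤ 4 by decide); simpa only [fs3, fs4] using this
    have hp45 : 0 ≤ x 0 - x 4 - x 5 := by
      have := h2 3 4 (by decide); simpa only [fs3, fs4] using this
    exact ⟨k1, m12, m23, m34, m45, by linarith, by linarith, by linarith⟩
  · rintro ⟨k1, m12, m23, m34, m45, hp45, hs2, hs3⟩
    have hm : Monotone fun k : Fin 5 => x k.succ := by
      rw [Fin.monotone_iff_le_succ]
      intro i
      fin_cases i
      · exact m12
      · exact m23
      · exact m34
      · exact m45
    refine ⟨⟨fun i => ?_, fun i j hij => ?_, by linarith, by linarith⟩, hm⟩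
    · have h := hm (Fin.zero_le i)
      simp only [fs0] at h
      linarith [h, show (fun k : Fin 5 => x k.succ) i = x i.succ from rfl]
    · have e3 : (fun k : Fin 5 => x k.succ) 3 = x 4 := by simp only [fs3]
      have e4 : (fun k : Fin 5 => x k.succ) 4 = x 5 := by simp only [fs4]
      have ei : ∀ k : Fin 5, (fun k : Fin 5 => x k.succ) k = x k.succ := fun k => rfl
      rcases hij.lt_or_gt with hlt | hlt
      · have hi : i ≤ (3:Fin 5) := by omega
        have hj : j ≤ (4:Fin 5) := by omega
        have l1 := hm hi
        have l2 := hm hj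
        rw [e3, ei] at l1
        rw [e4, ei] at l2
        linarith
      · have hi : i ≤ (4:Fin 5) := by omega
        have hj : j ≤ (3:Fin 5) := by omega
        have l1 := hm hi
        have l2 := hm hj
        rw [e4, ei] at l1
        rw [e3, ei] at l2
        linarith

lemma R6_eq_union : R6 = S1 ∪ S2 ∪ S3 ∪ S4 := by
  ext x
  simp only [R6, Set.mem_setOf_eq, Set.mem_union, memS1 x, memS2 x, memS3 x, memS4 x]
  constructor
  · rintro ⟨k1, m12, m23, m34, m45, hp, hs2, hs3⟩
    rcases le_total 0 (x 3 - x 1 - x 2) with hw1 | hw1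
    · exact Or.inl (Or.inl (Or.inl ⟨⟨by linarith, by linarith, by linarith, by linarith,
        by linarith, by linarith⟩, by linarith⟩))
    · rcases le_total 0 (x 3 + x 5 - x 1 - x 2 - x 4) with hw2 | hw2
      · exact Or.inl (Or.inl (Or.inr ⟨⟨by linarith, by linarith, by linarith, by linarith,
          by linarith, by linarith⟩, by linarith⟩))
      · rcases le_total 0 (x 4 + x 5 - x 1 - x 2 - x 3) with hw3 | hw3
        · exact Or.inl (Or.inr ⟨⟨by linarith, by linarith, by linarith, by linarith,
            by linarith, by linarith⟩, by linarith⟩)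
        · exact Or.inr ⟨⟨by linarith, by linarith, by linarith, by linarith,
            by linarith, by linarith⟩, by linarith⟩
  · rintro (((⟨⟨r0, r1, r2, r3, r4, r5⟩, rs⟩ | ⟨⟨r0, r1, r2, r3, r4, r5⟩, rs⟩) |
      ⟨⟨r0, r1, r2, r3, r4, r5⟩, rs⟩) | ⟨⟨r0, r1, r2, r3, r4, r5⟩, rs⟩) <;>
      exact ⟨by linarith, by linarith, by linarith, by linarith, by linarith, by linarith,
        by linarith, by linarith⟩

/-! ### Null hyperplanes and measurability in dimension 6 -/

lemma null_plane (L : (Fin 6 → ℝ) →ₗ[ℝ] ℝ) (x0 : Fin 6 → ℝ) (hx : L x0 ≠ 0) :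
    volume {x : Fin 6 → ℝ | L x = 0} = 0 := by
  have hset : {x : Fin 6 → ℝ | L x = 0} = (LinearMap.ker L : Set (Fin 6 → ℝ)) := by
    ext b; simp [LinearMap.mem_ker]
  rw [hset]
  refine Measure.addHaar_submodule _ _ fun htop => ?_
  exact hx (LinearMap.mem_ker.1 (htop ▸ Submodule.mem_top : x0 ∈ LinearMap.ker L))

noncomputable def pj (i : Fin 6) : (Fin 6 → ℝ) →ₗ[ℝ] ℝ := LinearMap.proj i

lemma null_w1 : volume {x : Fin 6 → ℝ | x 3 - x 1 - x 2 = 0} = 0 := by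
  have h : {x : Fin 6 → ℝ | x 3 - x 1 - x 2 = 0} = {x : Fin 6 → ℝ | (pj 3 - pj 1 - pj 2) x = 0} := by
    ext x
    simp only [Set.mem_setOf_eq, LinearMap.sub_apply, pj, LinearMap.proj_apply]
  rw [h]
  refine null_plane _ (Pi.single 3 1) ?_
  simp [pj, Pi.single_apply]

lemma null_w2 : volume {x : Fin 6 → ℝ | x 3 + x 5 - x 1 - x 2 - x 4 = 0} = 0 := by
  have h : {x : Fin 6 → ℝ | x 3 + x 5 - x 1 - x 2 - x 4 = 0}
      = {x : Fin 6 → ℝ | (pj 3 + pj 5 - pj 1 - pj 2 - pj 4) x = 0} := by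
    ext x
    simp only [Set.mem_setOf_eq, LinearMap.sub_apply, LinearMap.add_apply, pj,
      LinearMap.proj_apply]
  rw [h]
  refine null_plane _ (Pi.single 5 1) ?_
  simp [pj, Pi.single_apply]

lemma null_w3 : volume {x : Fin 6 → ℝ | x 4 + x 5 - x 1 - x 2 - x 3 = 0} = 0 := by
  have h : {x : Fin 6 → ℝ | x 4 + x 5 - x 1 - x 2 - x 3 = 0}
      = {x : Fin 6 → ℝ | (pj 4 + pj 5 - pj 1 - pj 2 - pj 3) x = 0} := by
    ext x
    simp only [Set.mem_setOf_eq, LinearMap.sub_apply, LinearMap.add_apply, pj,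
      LinearMap.proj_apply]
  rw [h]
  refine null_plane _ (Pi.single 5 1) ?_
  simp [pj, Pi.single_apply]

lemma measurable_DSet : MeasurableSet DSet := by
  have h1 : MeasurableSet {t : Fin 6 → ℝ | ∀ j, 0 ≤ t j} := by
    rw [Set.setOf_forall]
    exact MeasurableSet.iInter fun j => measurableSet_le measurable_const (measurable_pi_apply j)
  have h2 : MeasurableSet {t : Fin 6 → ℝ | ∑ j, t j ≤ 1} :=
    measurableSet_le (Finset.measurable_sum _ fun j _ => measurable_pi_apply j) measurable_const
  exact h1.inter h2

lemma measurable_S1 : MeasurableSet S1 :=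
  measurable_DSet.preimage (LinearMap.continuous_of_finiteDimensional _).measurable
lemma measurable_S2 : MeasurableSet S2 :=
  measurable_DSet.preimage (LinearMap.continuous_of_finiteDimensional _).measurable
lemma measurable_S3 : MeasurableSet S3 :=
  measurable_DSet.preimage (LinearMap.continuous_of_finiteDimensional _).measurable
lemma measurable_S4 : MeasurableSet S4 :=
  measurable_DSet.preimage (LinearMap.continuous_of_finiteDimensional _).measurable

/-! ### Volumes of the simplices -/

lemma volD : volume DSet = ENNReal.ofReal (1/720) := by
  have h := corner_simplex_vol 6 1 zero_le_one
  rw [show DSet = {x : Fin 6 → ℝ | (∀ i, 0 ≤ x i) ∧ ∑ i, x i ≤ 1} from rfl, h]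
  congr 1
  norm_num [Nat.factorial]

lemma volS1 : volume S1 = ENNReal.ofReal (1/414720) := by
  have hd : LinearMap.det (Matrix.toLin' A1) = 576 := by rw [LinearMap.det_toLin']; exact detA1
  rw [show S1 = Matrix.toLin' A1 ⁻¹' DSet from rfl,
    Measure.addHaar_preimage_linearMap volume (by rw [hd]; norm_num) DSet, hd, volD,
    ← ENNReal.ofReal_mul (abs_nonneg _)]
  congr 1
  rw [show |((576:ℝ))⁻¹| = 576⁻¹ by rw [abs_of_pos]; norm_num]
  norm_num

lemma volS2 : volume S2 = ENNReal.ofReal (1/414720) := by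
  have hd : LinearMap.det (Matrix.toLin' A2) = -576 := by rw [LinearMap.det_toLin']; exact detA2
  rw [show S2 = Matrix.toLin' A2 ⁻¹' DSet from rfl,
    Measure.addHaar_preimage_linearMap volume (by rw [hd]; norm_num) DSet, hd, volD,
    ← ENNReal.ofReal_mul (abs_nonneg _)]
  congr 1
  rw [show |((-576:ℝ))⁻¹| = 576⁻¹ by rw [abs_of_neg]; norm_num; norm_num]
  norm_num

lemma volS3 : volume S3 = ENNReal.ofReal (1/622080) := by
  have hd : LinearMap.det (Matrix.toLin' A3) = 864 := by rw [LinearMap.det_toLin']; exact detA3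
  rw [show S3 = Matrix.toLin' A3 ⁻¹' DSet from rfl,
    Measure.addHaar_preimage_linearMap volume (by rw [hd]; norm_num) DSet, hd, volD,
    ← ENNReal.ofReal_mul (abs_nonneg _)]
  congr 1
  rw [show |((864:ℝ))⁻¹| = 864⁻¹ by rw [abs_of_pos]; norm_num]
  norm_num

lemma volS4 : volume S4 = ENNReal.ofReal (1/777600) := by
  have hd : LinearMap.det (Matrix.toLin' A4) = -1080 := by rw [LinearMap.det_toLin']; exact detA4
  rw [show S4 = Matrix.toLin' A4 ⁻¹' DSet from rfl,
    Measure.addHaar_preimage_linearMap volume (by rw [hd]; norm_num) DSet, hd, volD,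
    ← ENNReal.ofReal_mul (abs_nonneg _)]
  congr 1
  rw [show |((-1080:ℝ))⁻¹| = 1080⁻¹ by rw [abs_of_neg]; norm_num; norm_num]
  norm_num

/-! ### Disjointness of the simplices -/

lemma disj12 : S1 ∩ (S2 ∪ (S3 ∪ S4)) ⊆ {x : Fin 6 → ℝ | x 3 - x 1 - x 2 = 0} := by
  rintro x ⟨hx1, hx⟩
  obtain ⟨⟨r0, r1, r2, r3, r4, r5⟩, rs⟩ := (memS1 x).1 hx1
  rcases hx with hx2 | hx3 | hx4
  · obtain ⟨⟨q0, q1, q2, q3, q4, q5⟩, qs⟩ := (memS2 x).1 hx2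
    show x 3 - x 1 - x 2 = 0
    linarith
  · obtain ⟨⟨q0, q1, q2, q3, q4, q5⟩, qs⟩ := (memS3 x).1 hx3
    show x 3 - x 1 - x 2 = 0
    linarith
  · obtain ⟨⟨q0, q1, q2, q3, q4, q5⟩, qs⟩ := (memS4 x).1 hx4
    show x 3 - x 1 - x 2 = 0
    linarith

lemma disj23 : S2 ∩ (S3 ∪ S4) ⊆ {x : Fin 6 → ℝ | x 3 + x 5 - x 1 - x 2 - x 4 = 0} := by
  rintro x ⟨hx2, hx⟩
  obtain ⟨⟨r0, r1, r2, r3, r4, r5⟩, rs⟩ := (memS2 x).1 hx2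
  rcases hx with hx3 | hx4
  · obtain ⟨⟨q0, q1, q2, q3, q4, q5⟩, qs⟩ := (memS3 x).1 hx3
    show x 3 + x 5 - x 1 - x 2 - x 4 = 0
    linarith
  · obtain ⟨⟨q0, q1, q2, q3, q4, q5⟩, qs⟩ := (memS4 x).1 hx4
    show x 3 + x 5 - x 1 - x 2 - x 4 = 0
    linarith

lemma disj34 : S3 ∩ S4 ⊆ {x : Fin 6 → ℝ | x 4 + x 5 - x 1 - x 2 - x 3 = 0} := by
  rintro x ⟨hx3, hx4⟩
  obtain ⟨⟨r0, r1, r2, r3, r4, r5⟩, rs⟩ := (memS3 x).1 hx3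
  obtain ⟨⟨q0, q1, q2, q3, q4, q5⟩, qs⟩ := (memS4 x).1 hx4
  show x 4 + x 5 - x 1 - x 2 - x 3 = 0
  linarith

/-! ### Volume of the sorted region -/

lemma vol_R6 : volume R6 = ENNReal.ofReal (1/129600) := by
  have hu : R6 = S1 ∪ (S2 ∪ (S3 ∪ S4)) := by
    rw [R6_eq_union, Set.union_assoc, Set.union_assoc]
  rw [hu]
  rw [measure_union₀ ((measurable_S2.union (measurable_S3.union measurable_S4)).nullMeasurableSet)
    (measure_mono_null disj12 null_w1)]
  rw [measure_union₀ ((measurable_S3.union measurable_S4).nullMeasurableSet)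
    (measure_mono_null disj23 null_w2)]
  rw [measure_union₀ (measurable_S4.nullMeasurableSet) (measure_mono_null disj34 null_w3)]
  rw [volS1, volS2, volS3, volS4]
  rw [← ENNReal.ofReal_add (by norm_num) (by norm_num), ← ENNReal.ofReal_add (by norm_num)
    (by norm_num), ← ENNReal.ofReal_add (by norm_num) (by norm_num)]
  congr 1
  norm_num

/-! ### The main theorem -/

theorem stmt_3 :
    volume {p : ℝ × (Fin 5 → ℝ) |
        (∀ i, 0 ≤ p.2 i) ∧
        (∀ i j : Fin 5, i ≠ j → 0 ≤ p.1 - p.2 i - p.2 j) ∧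
        0 ≤ 2 * p.1 - (∑ j, p.2 j) ∧
        3 * p.1 - (∑ j, p.2 j) ≤ 1} = ENNReal.ofReal (1 / 1080) ∧
      (6 : ℝ) * (1 / 1080) = 1 / 180 := by
  constructor
  · show volume Pset = ENNReal.ofReal (1 / 1080)
    rw [vol_Pset_eq]
    have hpre := (MeasureTheory.volume_preserving_piFinSuccAbove (fun _ : Fin 6 => ℝ) 0).measure_preimage
      ((measurable_Pset.inter (measurable_Wset 1)).nullMeasurableSet)
    rw [← hpre, preim_R6, vol_R6]
    rw [show (120 : ENNReal) = ENNReal.ofReal 120 by norm_num]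
    rw [← ENNReal.ofReal_mul (by norm_num)]
    congr 1
    norm_num
  · norm_num
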